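/- (Theorem 2: price Nash equilibrium under a regulatory fine.) Fix T > 0, β ≥ 0, 0 ≤ a, 0 ≤ b, a + b < 1, q1, q2 ∈ ℝ, C1, C2, S1, S2 ≥ 0, Z_A ∈ ℝ, and fine amounts f1, f2 ≥ 0. Define π1(p1,p2) = (p1 − f1)·D1(p1,p2) − C1(a−Z_A)² − S1·q1²·(a−Z_A)² and π2(p1,p2) = (p2 − f2)·(1−D1(p1,p2)) − C2(1−b−Z_A)² − S2·q2²·(1−b−Z_A)², where D1(p1,p2) = a + (1−a−b)/2 + β(q1−q2)/(2T(1−a−b)) + (p2−p1)/(2T(1−a−b)). Then the pair p1* = (β/3)(q1−q2) + T(1−a−b)(1+(a−b)/3) + (2/3)f1 + (1/3)f2 and p2* = (β/3)(q2−q1) + T(1−a−b)(1+(b−a)/3) + (2/3)f2 + (1/3)f1 is the unique pair (p1,p2) ∈ ℝ² such that p1 maximizes π1(·,p2) over ℝ and p2 maximizes π2(p1,·) over ℝ. -/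

import Mathlib

/-- If `2*p0 = k*E + q + f` then `p0` maximizes `p ↦ (p-f)*(E+(q-p)/k)`. -/
lemma quad_max_of_foc (k E f q p0 : ℝ) (hk : 0 < k)
    (hfoc : 2 * p0 = k * E + q + f) (p : ℝ) :
    (p - f) * (E + (q - p) / k) ≤ (p0 - f) * (E + (q - p0) / k) := by
  have hk' : k ≠ 0 := ne_of_gt hk
  have key : (p0 - f) * (E + (q - p0) / k) - (p - f) * (E + (q - p) / k)
      = (p - p0) ^ 2 / k := by
    field_simp
    linear_combination (p - p0) * hfoc
  have h0 : 0 ≤ (p - p0) ^ 2 / k := div_nonneg (sq_nonneg _) hk.le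
  linarith

/-- If `p0` maximizes `p ↦ (p-f)*(E+(q-p)/k)`, then `2*p0 = k*E + q + f`. -/
lemma quad_foc_of_max (k E f q p0 : ℝ) (hk : 0 < k)
    (hmax : ∀ p : ℝ, (p - f) * (E + (q - p) / k) ≤ (p0 - f) * (E + (q - p0) / k)) :
    2 * p0 = k * E + q + f := by
  have hk' : k ≠ 0 := ne_of_gt hk
  set g : ℝ := E + (q - p0) / k - (p0 - f) / k with hg
  have h := hmax (p0 + k * g / 2)
  have hident : (p0 + k * g / 2 - f) * (E + (q - (p0 + k * g / 2)) / k)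
      - (p0 - f) * (E + (q - p0) / k) = k * g ^ 2 / 4 := by
    rw [hg]
    field_simp
    ring
  clear_value g
  have hle : k * g ^ 2 / 4 ≤ 0 := by linarith
  have hg2 : g ^ 2 ≤ 0 := by nlinarith
  have hgz : g = 0 := by
    have := le_antisymm hg2 (sq_nonneg g)
    exact pow_eq_zero_iff (two_ne_zero) |>.mp this
  have : E + (q - p0) / k - (p0 - f) / k = 0 := by rw [← hg]; exact hgz
  field_simp at this
  linarith

/-- Theorem 2: under regulatory fines `f1, f2 ≥ 0`, the unique price Nash
equilibrium is `p1* = (β/3)(q1−q2) + T(1−a−b)(1+(a−b)/3) + 2f1/3 + f2/3` and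
`p2* = (β/3)(q2−q1) + T(1−a−b)(1+(b−a)/3) + 2f2/3 + f1/3`. -/
theorem price_nash_equilibrium_fine
    (T β a b q1 q2 C1 C2 S1 S2 ZA f1 f2 : ℝ)
    (hT : 0 < T) (hβ : 0 ≤ β) (ha : 0 ≤ a) (hb : 0 ≤ b) (hab : a + b < 1)
    (hC1 : 0 ≤ C1) (hC2 : 0 ≤ C2) (hS1 : 0 ≤ S1) (hS2 : 0 ≤ S2)
    (hf1 : 0 ≤ f1) (hf2 : 0 ≤ f2) :
    let D1 : ℝ → ℝ → ℝ := fun p1 p2 =>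
      a + (1 - a - b) / 2 + β * (q1 - q2) / (2 * T * (1 - a - b)) +
        (p2 - p1) / (2 * T * (1 - a - b))
    let π1 : ℝ → ℝ → ℝ := fun p1 p2 =>
      (p1 - f1) * D1 p1 p2 - C1 * (a - ZA) ^ 2 - S1 * q1 ^ 2 * (a - ZA) ^ 2
    let π2 : ℝ → ℝ → ℝ := fun p1 p2 =>
      (p2 - f2) * (1 - D1 p1 p2) - C2 * (1 - b - ZA) ^ 2 - S2 * q2 ^ 2 * (1 - b - ZA) ^ 2
    let p1star : ℝ :=
      (β / 3) * (q1 - q2) + T * (1 - a - b) * (1 + (a - b) / 3) + (2 / 3) * f1 + (1 / 3) * f2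
    let p2star : ℝ :=
      (β / 3) * (q2 - q1) + T * (1 - a - b) * (1 + (b - a) / 3) + (2 / 3) * f2 + (1 / 3) * f1
    ((∀ p : ℝ, π1 p p2star ≤ π1 p1star p2star) ∧
      (∀ p : ℝ, π2 p1star p ≤ π2 p1star p2star)) ∧
    ∀ p1 p2 : ℝ,
      ((∀ p : ℝ, π1 p p2 ≤ π1 p1 p2) ∧ (∀ p : ℝ, π2 p1 p ≤ π2 p1 p2)) →
      p1 = p1star ∧ p2 = p2star := by
  intro D1 π1 π2 p1star p2star
  have hab' : (0:ℝ) < 1 - a - b := by linarith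
  have hk : (0:ℝ) < 2 * T * (1 - a - b) := by positivity
  have hk' : (2 * T * (1 - a - b)) ≠ 0 := ne_of_gt hk
  -- abbreviations
  have hD1 : ∀ p q : ℝ, D1 p q
      = (a + (1 - a - b) / 2 + β * (q1 - q2) / (2 * T * (1 - a - b)))
        + (q - p) / (2 * T * (1 - a - b)) := by
    intro p q; simp only [D1]; try ring
  have hD2 : ∀ p q : ℝ, 1 - D1 p q
      = (1 - a - (1 - a - b) / 2 - β * (q1 - q2) / (2 * T * (1 - a - b)))
        + (p - q) / (2 * T * (1 - a - b)) := by
    intro p q; simp only [D1]; try ring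
  have hfoc1 : 2 * p1star
      = 2 * T * (1 - a - b) * (a + (1 - a - b) / 2 + β * (q1 - q2) / (2 * T * (1 - a - b)))
        + p2star + f1 := by
    simp only [p1star, p2star]
    field_simp
    ring
  have hfoc2 : 2 * p2star
      = 2 * T * (1 - a - b) * (1 - a - (1 - a - b) / 2 - β * (q1 - q2) / (2 * T * (1 - a - b)))
        + p1star + f2 := by
    simp only [p1star, p2star]
    field_simp
    ring
  constructor
  · constructor
    · intro p
      have h := quad_max_of_foc (2 * T * (1 - a - b))
        (a + (1 - a - b) / 2 + β * (q1 - q2) / (2 * T * (1 - a - b))) f1 p2star p1star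
        hk hfoc1 p
      simp only [π1]
      rw [hD1 p p2star, hD1 p1star p2star]
      linarith
    · intro p
      have h := quad_max_of_foc (2 * T * (1 - a - b))
        (1 - a - (1 - a - b) / 2 - β * (q1 - q2) / (2 * T * (1 - a - b))) f2 p1star p2star
        hk hfoc2 p
      simp only [π2]
      rw [hD2 p1star p, hD2 p1star p2star]
      linarith
  · rintro p1 p2 ⟨h1, h2⟩
    have e1 := quad_foc_of_max (2 * T * (1 - a - b))
      (a + (1 - a - b) / 2 + β * (q1 - q2) / (2 * T * (1 - a - b))) f1 p2 p1 hk ?_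
    · have e2 := quad_foc_of_max (2 * T * (1 - a - b))
        (1 - a - (1 - a - b) / 2 - β * (q1 - q2) / (2 * T * (1 - a - b))) f2 p1 p2 hk ?_
      · -- solve the linear system
        have hkE1 : 2 * T * (1 - a - b)
            * (a + (1 - a - b) / 2 + β * (q1 - q2) / (2 * T * (1 - a - b)))
            = T * (1 - a - b) * (1 + a - b) + β * (q1 - q2) := by
          field_simp
          ring
        have hkE2 : 2 * T * (1 - a - b)
            * (1 - a - (1 - a - b) / 2 - β * (q1 - q2) / (2 * T * (1 - a - b)))
            = T * (1 - a - b) * (1 + b - a) - β * (q1 - q2) := by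
          field_simp
          ring
        rw [hkE1] at e1
        rw [hkE2] at e2
        have hp1 : p1 = p1star := by
          simp only [p1star]; linarith
        have hp2 : p2 = p2star := by
          simp only [p2star]; linarith
        exact ⟨hp1, hp2⟩
      · intro p
        have h := h2 p
        simp only [π2] at h
        rw [hD2 p1 p, hD2 p1 p2] at h
        linarith
    · intro p
      have h := h1 p
      simp only [π1] at h
      rw [hD1 p p2, hD1 p1 p2] at h
      linarith
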